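/- Gaussian Poincaré inequality on the cylinder: there exists C = C(k,n) such that for Σ = S^k_{√(2k)} × ℝ^{n-k} ⊂ ℝ^{n+1} and any u ∈ W^{1,2} (Gaussian Sobolev space), ∫_Σ |x|²u² e^{-|x|²/4} ≤ C (∫_Σ u² e^{-|x|²/4} + ∫_Σ |∇_{ℝ^{n-k}} u|² e^{-|x|²/4}), where ∇_{ℝ^{n-k}} denotes the gradient in the Euclidean factor directions only. -/

import Mathlib

open MeasureTheory Real Filter Set


private lemma tendsto_zero_aux {f : ℝ → ℝ} (hf : Integrable f) {L : ℝ}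
    (h : Tendsto f atTop (nhds L)) : L = 0 := by
  by_contra hL
  have hL2 : 0 < |L| / 2 := by positivity
  have hev : ∀ᶠ t in atTop, |L| / 2 < |f t| := h.abs.eventually_const_lt (by linarith [abs_nonneg L])
  obtain ⟨T, hT⟩ := hev.exists_forall_of_atTop
  have hint : Integrable (fun _ : ℝ => |L| / 2) (volume.restrict (Ici T)) := by
    refine Integrable.mono' (hf.norm.integrableOn (s := Ici T)) aestronglyMeasurable_const ?_
    refine (ae_restrict_iff' measurableSet_Ici).mpr (ae_of_all _ fun t ht => ?_)
    simpa [abs_of_pos hL2] using (hT t ht).le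
  rw [integrable_const_iff] at hint
  rcases hint with h0 | hfin
  · exact hL2.ne' h0
  · exact absurd (measure_lt_top (volume.restrict (Ici T)) univ) (by simp [Real.volume_Ici])

private lemma tendsto_zero_aux' {f : ℝ → ℝ} (hf : Integrable f) {L : ℝ}
    (h : Tendsto f atBot (nhds L)) : L = 0 := by
  by_contra hL
  have hL2 : 0 < |L| / 2 := by positivity
  have hev : ∀ᶠ t in atBot, |L| / 2 < |f t| := h.abs.eventually_const_lt (by linarith [abs_nonneg L])
  obtain ⟨T, hT⟩ := hev.exists_forall_of_atBot
  have hint : Integrable (fun _ : ℝ => |L| / 2) (volume.restrict (Iic T)) := by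
    refine Integrable.mono' (hf.norm.integrableOn (s := Iic T)) aestronglyMeasurable_const ?_
    refine (ae_restrict_iff' measurableSet_Iic).mpr (ae_of_all _ fun t ht => ?_)
    simpa [abs_of_pos hL2] using (hT t ht).le
  rw [integrable_const_iff] at hint
  rcases hint with h0 | hfin
  · exact hL2.ne' h0
  · exact absurd (measure_lt_top (volume.restrict (Iic T)) univ) (by simp [Real.volume_Iic])

private lemma oneD (b : ℝ) (g : ℝ → ℝ) (hg : Differentiable ℝ g)
    (h1 : Integrable (fun t => g t ^ 2 * Real.exp (-(b + t ^ 2) / 4)))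
    (h2 : Integrable (fun t => deriv g t ^ 2 * Real.exp (-(b + t ^ 2) / 4)))
    (h3 : Integrable (fun t => t ^ 2 * g t ^ 2 * Real.exp (-(b + t ^ 2) / 4))) :
    ∫ t, t ^ 2 * g t ^ 2 * Real.exp (-(b + t ^ 2) / 4) ≤
      4 * (∫ t, g t ^ 2 * Real.exp (-(b + t ^ 2) / 4)) +
      16 * ∫ t, deriv g t ^ 2 * Real.exp (-(b + t ^ 2) / 4) := by
  set w : ℝ → ℝ := fun t => Real.exp (-(b + t ^ 2) / 4) with hw
  have hwpos : ∀ t, 0 < w t := fun t => Real.exp_pos _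
  have hwderiv : ∀ t, HasDerivAt w (-(t / 2) * w t) t := by
    intro t
    have hq : HasDerivAt (fun x : ℝ => -(b + x ^ 2) / 4) (-(2 * t ^ 1) / 4) t :=
      (((hasDerivAt_pow 2 t).const_add b).neg).div_const 4
    have := (Real.hasDerivAt_exp (-(b + t ^ 2) / 4)).comp t hq
    refine this.congr_deriv ?_
    simp [hw]; ring
  -- pieces
  set f1 : ℝ → ℝ := fun t => g t ^ 2 * w t with hf1
  set f2 : ℝ → ℝ := fun t => 2 * t * g t * deriv g t * w t with hf2
  set f3 : ℝ → ℝ := fun t => t ^ 2 / 2 * g t ^ 2 * w t with hf3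
  set ψ : ℝ → ℝ := fun t => f1 t + f2 t - f3 t with hψ
  set φ : ℝ → ℝ := fun t => t * g t ^ 2 * w t with hφ
  have hderiv : ∀ t, HasDerivAt φ (ψ t) t := by
    intro t
    have hgd : HasDerivAt g (deriv g t) t := (hg t).hasDerivAt
    have hg2 : HasDerivAt (fun x => g x ^ 2) (2 * g t ^ 1 * deriv g t) t := hgd.pow 2
    have htg2 : HasDerivAt (fun x => x * g x ^ 2)
        (1 * g t ^ 2 + t * (2 * g t ^ 1 * deriv g t)) t := (hasDerivAt_id t).mul hg2
    have := htg2.mul (hwderiv t)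
    refine this.congr_deriv ?_
    simp only [hψ, hf1, hf2, hf3]
    ring
  -- measurability of f2
  have hmeas2 : AEStronglyMeasurable f2 volume := by
    refine Measurable.aestronglyMeasurable ?_
    exact ((((measurable_const.mul measurable_id).mul hg.continuous.measurable).mul
      (measurable_deriv g)).mul (by fun_prop))
  have hboundint : Integrable (fun t => t ^ 2 * g t ^ 2 * w t / 4 + 4 * (deriv g t ^ 2 * w t)) :=
    (h3.div_const 4).add (h2.const_mul 4)
  have habs2 : ∀ t, |f2 t| ≤ t ^ 2 * g t ^ 2 * w t / 4 + 4 * (deriv g t ^ 2 * w t) := by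
    intro t
    have h0 : |f2 t| = |2 * t * g t * deriv g t| * w t := by
      rw [hf2, abs_mul, abs_of_pos (hwpos t)]
    rw [h0]
    have key : |2 * t * g t * deriv g t| ≤ t ^ 2 * g t ^ 2 / 4 + 4 * deriv g t ^ 2 := by
      rw [abs_le]
      constructor <;> nlinarith [sq_nonneg (t * g t / 2 - 2 * deriv g t),
        sq_nonneg (t * g t / 2 + 2 * deriv g t)]
    nlinarith [(hwpos t).le, mul_le_mul_of_nonneg_right key (hwpos t).le]
  have hf2int : Integrable f2 :=
    Integrable.mono' hboundint hmeas2 (ae_of_all _ fun t => by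
      rw [Real.norm_eq_abs]; exact habs2 t)
  have hf3int : Integrable f3 := by
    have := h3.div_const 2
    refine this.congr (ae_of_all _ fun t => ?_)
    simp only [hf3]; ring
  have hψint : Integrable ψ := (h1.add hf2int).sub hf3int
  have hφint : Integrable φ := by
    have hbd : Integrable (fun t => g t ^ 2 * w t + t ^ 2 * g t ^ 2 * w t) := h1.add h3
    refine Integrable.mono' hbd ?_ (ae_of_all _ fun t => ?_)
    · exact (Continuous.aestronglyMeasurable (by have := hg.continuous; fun_prop : Continuous fun t : ℝ => t * g t ^ 2 * Real.exp (-(b + t ^ 2) / 4)))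
    · rw [Real.norm_eq_abs, hφ]
      have heq : |t * g t ^ 2 * w t| = |t| * (g t ^ 2 * w t) := by
        rw [abs_mul, abs_mul, abs_of_nonneg (sq_nonneg (g t)), abs_of_pos (hwpos t)]; ring
      rw [heq]
      have h1t : |t| ≤ 1 + t ^ 2 := by nlinarith [abs_nonneg t, sq_abs t]
      have hnn : 0 ≤ g t ^ 2 * w t := mul_nonneg (sq_nonneg _) (hwpos t).le
      nlinarith [mul_le_mul_of_nonneg_right h1t hnn]
  -- FTC
  have hFTC : ∀ s : ℝ, φ s = φ 0 + ∫ x in (0 : ℝ)..s, ψ x := by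
    intro s
    have := intervalIntegral.integral_eq_sub_of_hasDerivAt (f := φ) (f' := ψ)
      (fun x _ => hderiv x) (hψint.intervalIntegrable : IntervalIntegrable ψ volume 0 s)
    linarith [this]
  have htop : Tendsto φ atTop (nhds (φ 0 + ∫ x in Ioi (0:ℝ), ψ x)) := by
    have h := intervalIntegral_tendsto_integral_Ioi 0 hψint.integrableOn tendsto_id
    exact (tendsto_const_nhds.add h).congr fun s => (hFTC s).symm
  have hbot : Tendsto φ atBot (nhds (φ 0 - ∫ x in Iic (0:ℝ), ψ x)) := by
    have h := intervalIntegral_tendsto_integral_Iic 0 hψint.integrableOn tendsto_id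
    have h2' : Tendsto (fun s : ℝ => φ 0 - ∫ x in s..(0:ℝ), ψ x) atBot
        (nhds (φ 0 - ∫ x in Iic (0:ℝ), ψ x)) := tendsto_const_nhds.sub h
    refine h2'.congr fun s => ?_
    have := hFTC s
    rw [intervalIntegral.integral_symm] at this
    linarith
  have hLtop : φ 0 + ∫ x in Ioi (0:ℝ), ψ x = 0 := tendsto_zero_aux hφint htop
  have hLbot : φ 0 - ∫ x in Iic (0:ℝ), ψ x = 0 := tendsto_zero_aux' hφint hbot
  have hψ0 : ∫ t, ψ t = 0 := by
    rw [← intervalIntegral.integral_Iic_add_Ioi (hψint.integrableOn) (hψint.integrableOn)]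
    linarith
  have hadd : Integrable (fun t => f1 t + f2 t) := h1.add hf2int
  have hsplit : ∫ t, ψ t = ((∫ t, f1 t) + ∫ t, f2 t) - ∫ t, f3 t := by
    simp only [hψ]
    rw [integral_sub hadd hf3int, integral_add h1 hf2int]
  have hf3eq : ∫ t, f3 t = (∫ t, t ^ 2 * g t ^ 2 * w t) / 2 := by
    rw [← integral_div]
    exact integral_congr_ae (ae_of_all _ fun t => by simp only [hf3]; ring)
  have hf2le : ∫ t, f2 t ≤ (∫ t, t ^ 2 * g t ^ 2 * w t) / 4 + 4 * ∫ t, deriv g t ^ 2 * w t := by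
    have h' : ∫ t, f2 t ≤ ∫ t, (t ^ 2 * g t ^ 2 * w t / 4 + 4 * (deriv g t ^ 2 * w t)) :=
      integral_mono hf2int hboundint fun t => (le_abs_self _).trans (habs2 t)
    rw [integral_add (h3.div_const 4) (h2.const_mul 4), integral_div, integral_const_mul] at h'
    exact h'
  have : (∫ t, t ^ 2 * g t ^ 2 * w t) / 2 = (∫ t, f1 t) + ∫ t, f2 t := by
    rw [← hf3eq]; linarith [hsplit, hψ0]
  simp only [hf1] at this
  simp only [hw] at this hf2le
  linarith [hf2le, this]

private lemma esum {m : ℕ} (y : EuclideanSpace ℝ (Fin m)) : ‖y‖ ^ 2 = ∑ i, y i ^ 2 := by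
  rw [EuclideanSpace.norm_eq, Real.sq_sqrt (Finset.sum_nonneg fun i _ => sq_nonneg _)]
  exact Finset.sum_congr rfl fun i _ => by rw [Real.norm_eq_abs, sq_abs]

private lemma grad_coord {m : ℕ} {v : EuclideanSpace ℝ (Fin m) → ℝ}
    {y : EuclideanSpace ℝ (Fin m)} (hv : DifferentiableAt ℝ v y) (i : Fin m) :
    fderiv ℝ v y (EuclideanSpace.single i 1) = gradient v y i := by
  have h := hv.hasGradientAt
  rw [hasGradientAt_iff_hasFDerivAt] at h
  rw [h.fderiv, InnerProductSpace.toDual_apply_apply, EuclideanSpace.inner_single_right]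
  simp

private lemma grad_sq_sum {m : ℕ} {v : EuclideanSpace ℝ (Fin m) → ℝ}
    (hv : Differentiable ℝ v) (y : EuclideanSpace ℝ (Fin m)) :
    ∑ i, fderiv ℝ v y (EuclideanSpace.single i 1) ^ 2 = ‖gradient v y‖ ^ 2 := by
  rw [esum (gradient v y)]
  exact Finset.sum_congr rfl fun i _ => by rw [grad_coord (hv y) i]

private lemma fiberLemma (m : ℕ) (hm : 1 ≤ m) (b : ℝ)
    (v : EuclideanSpace ℝ (Fin m) → ℝ) (hv : Differentiable ℝ v)
    (h1 : Integrable (fun y => v y ^ 2 * Real.exp (-(b + ‖y‖ ^ 2) / 4)))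
    (h2 : Integrable (fun y => ‖gradient v y‖ ^ 2 * Real.exp (-(b + ‖y‖ ^ 2) / 4)))
    (h3 : Integrable (fun y => ‖y‖ ^ 2 * v y ^ 2 * Real.exp (-(b + ‖y‖ ^ 2) / 4))) :
    ∫ y, ‖y‖ ^ 2 * v y ^ 2 * Real.exp (-(b + ‖y‖ ^ 2) / 4) ≤
      4 * m * (∫ y, v y ^ 2 * Real.exp (-(b + ‖y‖ ^ 2) / 4)) +
      16 * ∫ y, ‖gradient v y‖ ^ 2 * Real.exp (-(b + ‖y‖ ^ 2) / 4) := by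
  classical
  obtain ⟨m', rfl⟩ : ∃ m', m = m' + 1 := ⟨m - 1, by omega⟩
  have hvC : Continuous v := hv.continuous
  have hwC : Continuous (fun y : EuclideanSpace ℝ (Fin (m' + 1)) =>
      Real.exp (-(b + ‖y‖ ^ 2) / 4)) := by fun_prop
  set d : Fin (m' + 1) → EuclideanSpace ℝ (Fin (m' + 1)) → ℝ :=
    fun i y => fderiv ℝ v y (EuclideanSpace.single i 1) with hd
  have hdmeas : ∀ i, Measurable (d i) := fun i => measurable_fderiv_apply_const ℝ v _
  have hdsum : ∀ y, ∑ i, d i y ^ 2 = ‖gradient v y‖ ^ 2 := fun y => grad_sq_sum hv y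
  have hcoordle : ∀ (i : Fin (m' + 1)) (y : EuclideanSpace ℝ (Fin (m' + 1))),
      y i ^ 2 ≤ ‖y‖ ^ 2 := fun i y => by
    rw [esum y]
    exact Finset.single_le_sum (f := fun j => y j ^ 2) (fun _ _ => sq_nonneg _)
      (Finset.mem_univ i)
  have hdle : ∀ i y, d i y ^ 2 ≤ ‖gradient v y‖ ^ 2 := fun i y => by
    rw [← hdsum y]
    exact Finset.single_le_sum (f := fun j => d j y ^ 2) (fun _ _ => sq_nonneg _)
      (Finset.mem_univ i)
  have hcoordmeas : ∀ i : Fin (m' + 1),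
      Measurable (fun y : EuclideanSpace ℝ (Fin (m' + 1)) => y i) := fun i =>
    (measurable_pi_apply i).comp (MeasurableEquiv.toLp 2 (Fin (m' + 1) → ℝ)).symm.measurable
  have hXi : ∀ i, Integrable (fun y : EuclideanSpace ℝ (Fin (m' + 1)) =>
      y i ^ 2 * v y ^ 2 * Real.exp (-(b + ‖y‖ ^ 2) / 4)) := by
    intro i
    refine h3.mono' (Measurable.aestronglyMeasurable ?_) (ae_of_all _ fun y => ?_)
    · exact (((hcoordmeas i).pow_const 2).mul (hvC.measurable.pow_const 2)).mul hwC.measurable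
    · rw [Real.norm_eq_abs, abs_of_nonneg (by positivity)]
      have h0 : (0:ℝ) ≤ v y ^ 2 * Real.exp (-(b + ‖y‖ ^ 2) / 4) := by positivity
      calc y i ^ 2 * v y ^ 2 * Real.exp (-(b + ‖y‖ ^ 2) / 4)
          = y i ^ 2 * (v y ^ 2 * Real.exp (-(b + ‖y‖ ^ 2) / 4)) := by ring
        _ ≤ ‖y‖ ^ 2 * (v y ^ 2 * Real.exp (-(b + ‖y‖ ^ 2) / 4)) :=
            mul_le_mul_of_nonneg_right (hcoordle i y) h0
        _ = ‖y‖ ^ 2 * v y ^ 2 * Real.exp (-(b + ‖y‖ ^ 2) / 4) := by ring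
  have hBi : ∀ i, Integrable (fun y : EuclideanSpace ℝ (Fin (m' + 1)) =>
      d i y ^ 2 * Real.exp (-(b + ‖y‖ ^ 2) / 4)) := by
    intro i
    refine h2.mono' (Measurable.aestronglyMeasurable ?_) (ae_of_all _ fun y => ?_)
    · exact (((hdmeas i).pow_const 2)).mul hwC.measurable
    · rw [Real.norm_eq_abs, abs_of_nonneg (by positivity)]
      exact mul_le_mul_of_nonneg_right (hdle i y) (Real.exp_pos _).le
  -- the key per-coordinate estimate
  have key : ∀ i : Fin (m' + 1),
      (∫ y, y i ^ 2 * v y ^ 2 * Real.exp (-(b + ‖y‖ ^ 2) / 4)) ≤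
        4 * (∫ y, v y ^ 2 * Real.exp (-(b + ‖y‖ ^ 2) / 4)) +
        16 * ∫ y, d i y ^ 2 * Real.exp (-(b + ‖y‖ ^ 2) / 4) := by
    intro i
    set T : EuclideanSpace ℝ (Fin (m' + 1)) ≃ᵐ ℝ × (Fin m' → ℝ) :=
      (MeasurableEquiv.toLp 2 (Fin (m' + 1) → ℝ)).symm.trans
        (MeasurableEquiv.piFinSuccAbove (fun _ => ℝ) i) with hT
    have hTmp : MeasurePreserving T volume (volume.prod volume) :=
      (volume_preserving_piFinSuccAbove (fun _ : Fin (m' + 1) => ℝ) i).comp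
        (EuclideanSpace.volume_preserving_symm_measurableEquiv_toLp (Fin (m' + 1)))
    have hTsymm : MeasurePreserving T.symm (volume.prod volume) volume := hTmp.symm T
    have hco : ∀ (t : ℝ) (r : Fin m' → ℝ) (j : Fin (m' + 1)),
        (T.symm (t, r)) j = Fin.insertNth (α := fun _ => ℝ) i t r j := fun t r j => rfl
    have hnormT : ∀ (t : ℝ) (r : Fin m' → ℝ),
        ‖T.symm (t, r)‖ ^ 2 = t ^ 2 + ∑ j, r j ^ 2 := by
      intro t r
      rw [esum (T.symm (t, r))]
      calc ∑ j, (T.symm (t, r)) j ^ 2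
          = ∑ j, (Fin.insertNth (α := fun _ => ℝ) i t r j) ^ 2 :=
            Finset.sum_congr rfl fun j _ => by rw [hco t r j]
        _ = t ^ 2 + ∑ j, r j ^ 2 := by
            rw [Fin.sum_univ_succAbove
              (fun j => (Fin.insertNth (α := fun _ => ℝ) i t r j) ^ 2) i]
            simp
    have hcoordT : ∀ (t : ℝ) (r : Fin m' → ℝ), (T.symm (t, r)) i = t := by
      intro t r
      rw [hco t r i]
      simp
    have hline : ∀ (r : Fin m' → ℝ) (t : ℝ),
        T.symm (t, r) = T.symm (0, r) + t • (EuclideanSpace.single i (1:ℝ)) := by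
      intro r t
      ext j
      have hadd : (T.symm (0, r) + t • EuclideanSpace.single i (1:ℝ)) j
          = (T.symm (0, r)) j + t * (EuclideanSpace.single i (1:ℝ)) j := rfl
      rw [hco t r j, hadd, hco 0 r j, EuclideanSpace.single_apply]
      rcases eq_or_ne j i with h | h
      · subst h; simp
      · obtain ⟨j', rfl⟩ := Fin.exists_succAbove_eq h
        simp [Fin.succAbove_ne]
    have hDeriv : ∀ (r : Fin m' → ℝ) (t : ℝ),
        HasDerivAt (fun s => v (T.symm (s, r))) (d i (T.symm (t, r))) t := by
      intro r t
      have hmap : HasDerivAt (fun s : ℝ => T.symm (s, r))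
          (EuclideanSpace.single i (1:ℝ)) t := by
        have heq : (fun s : ℝ => T.symm (s, r))
            = fun s => T.symm (0, r) + s • EuclideanSpace.single i (1:ℝ) :=
          funext fun s => hline r s
        rw [heq]
        simpa using ((hasDerivAt_id t).smul_const (EuclideanSpace.single i (1:ℝ))).const_add
          (T.symm (0, r))
      have hc := (hv (T.symm (t, r))).hasFDerivAt.comp_hasDerivAt t hmap
      exact hc
    -- transfer integrals
    have htrans : ∀ F : EuclideanSpace ℝ (Fin (m' + 1)) → ℝ, Integrable F →
        Integrable (fun p : ℝ × (Fin m' → ℝ) => F (T.symm p)) (volume.prod volume) ∧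
        (∫ y, F y) = ∫ r, ∫ t, F (T.symm (t, r)) := by
      intro F hF
      have hemb := T.symm.measurableEmbedding
      have hi : Integrable (fun p : ℝ × (Fin m' → ℝ) => F (T.symm p)) (volume.prod volume) :=
        (hTsymm.integrable_comp_emb hemb).mpr hF
      exact ⟨hi, by rw [← hTsymm.integral_comp hemb F]; exact integral_prod_symm _ hi⟩
    obtain ⟨hi1, he1⟩ := htrans _ h1
    obtain ⟨hi2, he2⟩ := htrans _ (hBi i)
    obtain ⟨hi3, he3⟩ := htrans _ (hXi i)
    simp only [] at hi1 hi2 hi3 he1 he2 he3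
    have hg1 := hi1.integral_prod_right
    have hg2 := hi2.integral_prod_right
    have hg3 := hi3.integral_prod_right
    rw [he1, he2, he3]
    have hmono : (∫ r, ∫ t, (T.symm (t, r)) i ^ 2 * v (T.symm (t, r)) ^ 2 *
          Real.exp (-(b + ‖T.symm (t, r)‖ ^ 2) / 4)) ≤
        ∫ r, (4 * (∫ t, v (T.symm (t, r)) ^ 2 * Real.exp (-(b + ‖T.symm (t, r)‖ ^ 2) / 4))
          + 16 * ∫ t, d i (T.symm (t, r)) ^ 2 *
            Real.exp (-(b + ‖T.symm (t, r)‖ ^ 2) / 4)) := by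
      refine integral_mono_ae hg3 ((hg1.const_mul 4).add (hg2.const_mul 16)) ?_
      filter_upwards [hi1.prod_left_ae, hi2.prod_left_ae, hi3.prod_left_ae] with r hr1 hr2 hr3
      have hr1' : Integrable (fun t => v (T.symm (t, r)) ^ 2 *
          Real.exp (-((b + ∑ j, r j ^ 2) + t ^ 2) / 4)) := by
        refine hr1.congr (ae_of_all _ fun t => ?_)
        show v (T.symm (t, r)) ^ 2 * Real.exp (-(b + ‖T.symm (t, r)‖ ^ 2) / 4)
          = v (T.symm (t, r)) ^ 2 * Real.exp (-((b + ∑ j, r j ^ 2) + t ^ 2) / 4)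
        rw [hnormT t r, show -(b + (t ^ 2 + ∑ j, r j ^ 2)) / 4
          = -((b + ∑ j, r j ^ 2) + t ^ 2) / 4 from by ring]
      have hr2' : Integrable (fun t => deriv (fun s => v (T.symm (s, r))) t ^ 2 *
          Real.exp (-((b + ∑ j, r j ^ 2) + t ^ 2) / 4)) := by
        refine hr2.congr (ae_of_all _ fun t => ?_)
        show d i (T.symm (t, r)) ^ 2 * Real.exp (-(b + ‖T.symm (t, r)‖ ^ 2) / 4)
          = deriv (fun s => v (T.symm (s, r))) t ^ 2
            * Real.exp (-((b + ∑ j, r j ^ 2) + t ^ 2) / 4)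
        rw [hnormT t r, (hDeriv r t).deriv, show -(b + (t ^ 2 + ∑ j, r j ^ 2)) / 4
          = -((b + ∑ j, r j ^ 2) + t ^ 2) / 4 from by ring]
      have hr3' : Integrable (fun t => t ^ 2 * v (T.symm (t, r)) ^ 2 *
          Real.exp (-((b + ∑ j, r j ^ 2) + t ^ 2) / 4)) := by
        refine hr3.congr (ae_of_all _ fun t => ?_)
        show (T.symm (t, r)) i ^ 2 * v (T.symm (t, r)) ^ 2 *
            Real.exp (-(b + ‖T.symm (t, r)‖ ^ 2) / 4)
          = t ^ 2 * v (T.symm (t, r)) ^ 2 * Real.exp (-((b + ∑ j, r j ^ 2) + t ^ 2) / 4)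
        rw [hcoordT t r, hnormT t r, show -(b + (t ^ 2 + ∑ j, r j ^ 2)) / 4
          = -((b + ∑ j, r j ^ 2) + t ^ 2) / 4 from by ring]
      have H := oneD (b + ∑ j, r j ^ 2) (fun t => v (T.symm (t, r)))
        (fun t => (hDeriv r t).differentiableAt) hr1' hr2' hr3'
      have e3 : (∫ t, (T.symm (t, r)) i ^ 2 * v (T.symm (t, r)) ^ 2 *
            Real.exp (-(b + ‖T.symm (t, r)‖ ^ 2) / 4))
          = ∫ t, t ^ 2 * v (T.symm (t, r)) ^ 2 *
            Real.exp (-((b + ∑ j, r j ^ 2) + t ^ 2) / 4) := by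
        refine integral_congr_ae (ae_of_all _ fun t => ?_)
        show (T.symm (t, r)) i ^ 2 * v (T.symm (t, r)) ^ 2 *
            Real.exp (-(b + ‖T.symm (t, r)‖ ^ 2) / 4)
          = t ^ 2 * v (T.symm (t, r)) ^ 2 * Real.exp (-((b + ∑ j, r j ^ 2) + t ^ 2) / 4)
        rw [hcoordT t r, hnormT t r, show -(b + (t ^ 2 + ∑ j, r j ^ 2)) / 4
          = -((b + ∑ j, r j ^ 2) + t ^ 2) / 4 from by ring]
      have e1 : (∫ t, v (T.symm (t, r)) ^ 2 * Real.exp (-(b + ‖T.symm (t, r)‖ ^ 2) / 4))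
          = ∫ t, v (T.symm (t, r)) ^ 2 *
            Real.exp (-((b + ∑ j, r j ^ 2) + t ^ 2) / 4) := by
        refine integral_congr_ae (ae_of_all _ fun t => ?_)
        show v (T.symm (t, r)) ^ 2 * Real.exp (-(b + ‖T.symm (t, r)‖ ^ 2) / 4)
          = v (T.symm (t, r)) ^ 2 * Real.exp (-((b + ∑ j, r j ^ 2) + t ^ 2) / 4)
        rw [hnormT t r, show -(b + (t ^ 2 + ∑ j, r j ^ 2)) / 4
          = -((b + ∑ j, r j ^ 2) + t ^ 2) / 4 from by ring]
      have e2 : (∫ t, d i (T.symm (t, r)) ^ 2 * Real.exp (-(b + ‖T.symm (t, r)‖ ^ 2) / 4))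
          = ∫ t, deriv (fun s => v (T.symm (s, r))) t ^ 2 *
            Real.exp (-((b + ∑ j, r j ^ 2) + t ^ 2) / 4) := by
        refine integral_congr_ae (ae_of_all _ fun t => ?_)
        show d i (T.symm (t, r)) ^ 2 * Real.exp (-(b + ‖T.symm (t, r)‖ ^ 2) / 4)
          = deriv (fun s => v (T.symm (s, r))) t ^ 2
            * Real.exp (-((b + ∑ j, r j ^ 2) + t ^ 2) / 4)
        rw [hnormT t r, (hDeriv r t).deriv, show -(b + (t ^ 2 + ∑ j, r j ^ 2)) / 4
          = -((b + ∑ j, r j ^ 2) + t ^ 2) / 4 from by ring]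
      show (∫ t, (T.symm (t, r)) i ^ 2 * v (T.symm (t, r)) ^ 2 *
            Real.exp (-(b + ‖T.symm (t, r)‖ ^ 2) / 4))
          ≤ 4 * (∫ t, v (T.symm (t, r)) ^ 2 * Real.exp (-(b + ‖T.symm (t, r)‖ ^ 2) / 4))
          + 16 * ∫ t, d i (T.symm (t, r)) ^ 2 * Real.exp (-(b + ‖T.symm (t, r)‖ ^ 2) / 4)
      rw [e1, e2, e3]
      exact H
    have hfin : ∫ r, (4 * (∫ t, v (T.symm (t, r)) ^ 2 *
            Real.exp (-(b + ‖T.symm (t, r)‖ ^ 2) / 4))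
          + 16 * ∫ t, d i (T.symm (t, r)) ^ 2 * Real.exp (-(b + ‖T.symm (t, r)‖ ^ 2) / 4))
        = 4 * (∫ r, ∫ t, v (T.symm (t, r)) ^ 2 * Real.exp (-(b + ‖T.symm (t, r)‖ ^ 2) / 4))
          + 16 * ∫ r, ∫ t, d i (T.symm (t, r)) ^ 2 *
            Real.exp (-(b + ‖T.symm (t, r)‖ ^ 2) / 4) := by
      rw [integral_add (hg1.const_mul 4) (hg2.const_mul 16), integral_const_mul,
        integral_const_mul]
    linarith [hmono, hfin]
  -- sum over coordinates
  have hsum3 : ∫ y, ‖y‖ ^ 2 * v y ^ 2 * Real.exp (-(b + ‖y‖ ^ 2) / 4)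
      = ∑ i, ∫ y, y i ^ 2 * v y ^ 2 * Real.exp (-(b + ‖y‖ ^ 2) / 4) := by
    rw [← integral_finset_sum Finset.univ (fun i _ => hXi i)]
    refine integral_congr_ae (ae_of_all _ fun y => ?_)
    show ‖y‖ ^ 2 * v y ^ 2 * Real.exp (-(b + ‖y‖ ^ 2) / 4)
      = ∑ i, y i ^ 2 * v y ^ 2 * Real.exp (-(b + ‖y‖ ^ 2) / 4)
    rw [show ‖y‖ ^ 2 * v y ^ 2 * Real.exp (-(b + ‖y‖ ^ 2) / 4)
      = (∑ i, y i ^ 2) * v y ^ 2 * Real.exp (-(b + ‖y‖ ^ 2) / 4) from by rw [← esum y],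
      Finset.sum_mul, Finset.sum_mul]
  have hsum2 : ∫ y, ‖gradient v y‖ ^ 2 * Real.exp (-(b + ‖y‖ ^ 2) / 4)
      = ∑ i, ∫ y, d i y ^ 2 * Real.exp (-(b + ‖y‖ ^ 2) / 4) := by
    rw [← integral_finset_sum Finset.univ (fun i _ => hBi i)]
    refine integral_congr_ae (ae_of_all _ fun y => ?_)
    show ‖gradient v y‖ ^ 2 * Real.exp (-(b + ‖y‖ ^ 2) / 4)
      = ∑ i, d i y ^ 2 * Real.exp (-(b + ‖y‖ ^ 2) / 4)
    rw [show ‖gradient v y‖ ^ 2 * Real.exp (-(b + ‖y‖ ^ 2) / 4)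
      = (∑ i, d i y ^ 2) * Real.exp (-(b + ‖y‖ ^ 2) / 4) from by rw [hdsum y],
      Finset.sum_mul]
  rw [hsum3, hsum2]
  have hcalc : ∑ i, ∫ y, y i ^ 2 * v y ^ 2 * Real.exp (-(b + ‖y‖ ^ 2) / 4)
      ≤ ∑ i : Fin (m' + 1), (4 * (∫ y, v y ^ 2 * Real.exp (-(b + ‖y‖ ^ 2) / 4))
          + 16 * ∫ y, d i y ^ 2 * Real.exp (-(b + ‖y‖ ^ 2) / 4)) :=
    Finset.sum_le_sum fun i _ => key i
  have hdist : ∑ i : Fin (m' + 1), (4 * (∫ y, v y ^ 2 * Real.exp (-(b + ‖y‖ ^ 2) / 4))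
          + 16 * ∫ y, d i y ^ 2 * Real.exp (-(b + ‖y‖ ^ 2) / 4))
      = 4 * (↑(m' + 1) : ℝ) * (∫ y, v y ^ 2 * Real.exp (-(b + ‖y‖ ^ 2) / 4))
          + 16 * ∑ i, ∫ y, d i y ^ 2 * Real.exp (-(b + ‖y‖ ^ 2) / 4) := by
    rw [Finset.sum_add_distrib, Finset.sum_const, ← Finset.mul_sum]
    simp [Finset.card_univ]
    push_cast
    ring
  calc ∑ i, ∫ y, y i ^ 2 * v y ^ 2 * Real.exp (-(b + ‖y‖ ^ 2) / 4)
      ≤ _ := hcalc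
    _ = _ := hdist
    _ ≤ 4 * (↑(m' + 1) : ℝ) * (∫ y, v y ^ 2 * Real.exp (-(b + ‖y‖ ^ 2) / 4))
          + 16 * ∑ i, ∫ y, d i y ^ 2 * Real.exp (-(b + ‖y‖ ^ 2) / 4) := le_refl _

/-- **Gaussian Poincaré inequality on the cylinder** `Σ = S^k_{√(2k)} × ℝ^{n-k} ⊂ ℝ^{n+1}`.
The cylinder is parametrized by `(θ, y) ∈ S^k × ℝ^{n-k}` (unit sphere, the point of `Σ` being
`(√(2k)·θ, y)`, so that `|x|² = 2k + |y|²` on `Σ`), with the surface measure the product of the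
spherical measure `volume.toSphere` and Lebesgue measure (this parametrizing measure agrees with
the surface measure of `Σ` up to a constant depending only on `k`, which is absorbed in `C`).
There exists `C = C(k,n)` so that for every `u` in the Gaussian Sobolev space `W^{1,2}`:
`∫_Σ |x|² u² e^{-|x|²/4} ≤ C (∫_Σ u² e^{-|x|²/4} + ∫_Σ |∇_{ℝ^{n-k}} u|² e^{-|x|²/4})`,
where `∇_{ℝ^{n-k}}` is the gradient in the Euclidean factor directions only. -/
theorem stmt_9 (k n : ℕ) (hk : 1 ≤ k) (hkn : k < n) :
    ∃ C : ℝ, 0 < C ∧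
      ∀ u : (Metric.sphere (0 : EuclideanSpace ℝ (Fin (k + 1))) 1 ×
          EuclideanSpace ℝ (Fin (n - k))) → ℝ,
        (∀ θ, Differentiable ℝ (fun y => u (θ, y))) →
        Integrable (fun p => u p ^ 2 * Real.exp (-(2 * k + ‖p.2‖ ^ 2) / 4))
          (((volume : Measure (EuclideanSpace ℝ (Fin (k + 1)))).toSphere).prod volume) →
        Integrable
          (fun p => ‖gradient (fun y => u (p.1, y)) p.2‖ ^ 2 *
            Real.exp (-(2 * k + ‖p.2‖ ^ 2) / 4))
          (((volume : Measure (EuclideanSpace ℝ (Fin (k + 1)))).toSphere).prod volume) →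
        (∫ p, (2 * k + ‖p.2‖ ^ 2) * u p ^ 2 * Real.exp (-(2 * k + ‖p.2‖ ^ 2) / 4)
            ∂(((volume : Measure (EuclideanSpace ℝ (Fin (k + 1)))).toSphere).prod volume)) ≤
          C * ((∫ p, u p ^ 2 * Real.exp (-(2 * k + ‖p.2‖ ^ 2) / 4)
              ∂(((volume : Measure (EuclideanSpace ℝ (Fin (k + 1)))).toSphere).prod volume)) +
            (∫ p, ‖gradient (fun y => u (p.1, y)) p.2‖ ^ 2 *
              Real.exp (-(2 * k + ‖p.2‖ ^ 2) / 4)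
              ∂(((volume : Measure (EuclideanSpace ℝ (Fin (k + 1)))).toSphere).prod volume))) := by
  refine ⟨2 * k + 4 * n + 16, by positivity, ?_⟩
  intro u hdiff hint1 hint2
  set μ := (((volume : Measure (EuclideanSpace ℝ (Fin (k + 1)))).toSphere).prod
    (volume : Measure (EuclideanSpace ℝ (Fin (n - k))))) with hμ
  have hA0 : 0 ≤ ∫ p, u p ^ 2 * Real.exp (-(2 * k + ‖p.2‖ ^ 2) / 4) ∂μ :=
    integral_nonneg fun p => by positivity
  have hB0 : 0 ≤ ∫ p, ‖gradient (fun y => u (p.1, y)) p.2‖ ^ 2 *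
      Real.exp (-(2 * k + ‖p.2‖ ^ 2) / 4) ∂μ :=
    integral_nonneg fun p => by positivity
  have hC0 : (0:ℝ) ≤ 2 * k + 4 * n + 16 := by positivity
  by_cases hI : Integrable (fun p : (Metric.sphere (0 : EuclideanSpace ℝ (Fin (k + 1))) 1 ×
      EuclideanSpace ℝ (Fin (n - k))) =>
      (2 * k + ‖p.2‖ ^ 2) * u p ^ 2 * Real.exp (-(2 * k + ‖p.2‖ ^ 2) / 4)) μ
  case neg =>
    rw [integral_undef hI]
    exact mul_nonneg hC0 (add_nonneg hA0 hB0)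
  case pos =>
    have hIy : Integrable (fun p : (Metric.sphere (0 : EuclideanSpace ℝ (Fin (k + 1))) 1 ×
        EuclideanSpace ℝ (Fin (n - k))) =>
        ‖p.2‖ ^ 2 * u p ^ 2 * Real.exp (-(2 * k + ‖p.2‖ ^ 2) / 4)) μ := by
      have h' := hI.sub (hint1.const_mul (2 * (k:ℝ)))
      exact h'.congr (ae_of_all _ fun p => by simp only [Pi.sub_apply]; ring)
    have hsplitL : ∫ p, (2 * k + ‖p.2‖ ^ 2) * u p ^ 2 *
          Real.exp (-(2 * k + ‖p.2‖ ^ 2) / 4) ∂μ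
        = 2 * (k:ℝ) * (∫ p, u p ^ 2 * Real.exp (-(2 * k + ‖p.2‖ ^ 2) / 4) ∂μ)
          + ∫ p, ‖p.2‖ ^ 2 * u p ^ 2 * Real.exp (-(2 * k + ‖p.2‖ ^ 2) / 4) ∂μ := by
      rw [← integral_const_mul, ← integral_add (hint1.const_mul (2 * (k:ℝ))) hIy]
      exact integral_congr_ae (ae_of_all _ fun p => by ring)
    have hmain : ∫ p, ‖p.2‖ ^ 2 * u p ^ 2 * Real.exp (-(2 * k + ‖p.2‖ ^ 2) / 4) ∂μ
        ≤ 4 * (↑(n - k) : ℝ) *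
            (∫ p, u p ^ 2 * Real.exp (-(2 * k + ‖p.2‖ ^ 2) / 4) ∂μ)
          + 16 * ∫ p, ‖gradient (fun y => u (p.1, y)) p.2‖ ^ 2 *
              Real.exp (-(2 * k + ‖p.2‖ ^ 2) / 4) ∂μ := by
      rw [hμ] at hIy hint1 hint2 ⊢
      rw [integral_prod _ hIy, integral_prod _ hint1, integral_prod _ hint2]
      have hg1 := hint1.integral_prod_left
      have hg2 := hint2.integral_prod_left
      have hg3 := hIy.integral_prod_left
      have hmono : (∫ θ, ∫ y, ‖y‖ ^ 2 * u (θ, y) ^ 2 *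
            Real.exp (-(2 * k + ‖y‖ ^ 2) / 4)
            ∂(volume : Measure (EuclideanSpace ℝ (Fin (n - k))))
            ∂((volume : Measure (EuclideanSpace ℝ (Fin (k + 1)))).toSphere))
          ≤ ∫ θ, (4 * (↑(n - k) : ℝ) * (∫ y, u (θ, y) ^ 2 *
              Real.exp (-(2 * k + ‖y‖ ^ 2) / 4)
              ∂(volume : Measure (EuclideanSpace ℝ (Fin (n - k)))))
            + 16 * ∫ y, ‖gradient (fun y' => u (θ, y')) y‖ ^ 2 *
              Real.exp (-(2 * k + ‖y‖ ^ 2) / 4)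
              ∂(volume : Measure (EuclideanSpace ℝ (Fin (n - k)))))
            ∂((volume : Measure (EuclideanSpace ℝ (Fin (k + 1)))).toSphere) := by
        refine integral_mono_ae hg3 (((hg1.const_mul _)).add (hg2.const_mul 16)) ?_
        filter_upwards [hint1.prod_right_ae, hint2.prod_right_ae, hIy.prod_right_ae]
          with θ h1θ h2θ h3θ
        exact fiberLemma (n - k) (by omega) (2 * (k:ℝ)) (fun y => u (θ, y)) (hdiff θ)
          h1θ h2θ h3θ
      calc _ ≤ _ := hmono
        _ = _ := by
          rw [integral_add ((hg1.const_mul _)) (hg2.const_mul 16), integral_const_mul,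
            integral_const_mul]
    have hcast : ((n - k : ℕ) : ℝ) ≤ (n : ℝ) := by exact_mod_cast Nat.sub_le n k
    have hk0 : (0:ℝ) ≤ (k:ℝ) := Nat.cast_nonneg k
    have hn0 : (0:ℝ) ≤ (n:ℝ) := Nat.cast_nonneg n
    rw [hsplitL]
    nlinarith [hA0, hB0, hcast, hk0, hn0,
      mul_le_mul_of_nonneg_right (by linarith : 4 * ((n - k : ℕ) : ℝ) ≤ 4 * (n:ℝ)) hA0,
      mul_nonneg (mul_nonneg (by norm_num : (0:ℝ) ≤ 2) hk0) hB0,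
      mul_nonneg (mul_nonneg (by norm_num : (0:ℝ) ≤ 4) hn0) hB0]
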